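/- If there exists a polynomial-time 3/2-approximation for the smallest 2-edge-connected spanning subgraph of a 2-edge-connected digraph and a polynomial-time 3/2-approximation for the smallest strongly connected spanning subgraph, then there is a polynomial-time 3/2-approximation for the smallest strongly connected spanning subgraph preserving the 2-edge-connected components: apply the first within each 2-edge-connected component and the second on the condensed graph with loops and parallel edges removed, then expand. -/
import Mathlib


variable {V : Type*}

/-- A walk in a digraph given by its edge set `E`, recorded as a list of edges. -/
inductive IsWalk (E : Set (V × V)) : V → V → List (V × V) → Prop
  | nil (u : V) : IsWalk E u u []
  | cons {u v w : V} {p : List (V × V)} (h : (u, v) ∈ E) (hp : IsWalk E v w p) :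
      IsWalk E u w ((u, v) :: p)

def Reaches (E : Set (V × V)) (u v : V) : Prop := ∃ p, IsWalk E u v p

def StronglyConnected (E : Set (V × V)) : Prop := ∀ u v : V, Reaches E u v

/-- Two edge-disjoint directed paths from `u` to `v`. -/
def TwoEDP (E : Set (V × V)) (u v : V) : Prop :=
  ∃ p q, IsWalk E u v p ∧ IsWalk E u v q ∧ p.Disjoint q

/-- `u` and `v` are 2-edge-connected. -/
def TwoEC (E : Set (V × V)) (u v : V) : Prop := TwoEDP E u v ∧ TwoEDP E v u

/-- A 2-edge-connected block: a maximal set of pairwise 2-edge-connected vertices. -/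
def Is2ECBlock (E : Set (V × V)) (B : Set V) : Prop :=
  (∀ u ∈ B, ∀ v ∈ B, TwoEC E u v) ∧
    ∀ C : Set V, B ⊆ C → (∀ u ∈ C, ∀ v ∈ C, TwoEC E u v) → C = B

def SameBlocks (E E' : Set (V × V)) : Prop :=
  ∀ B : Set V, Is2ECBlock E B ↔ Is2ECBlock E' B

/-- A strong bridge: an edge whose removal increases the number of strongly
connected components, i.e. destroys the mutual reachability of some pair. -/
def IsStrongBridge (E : Set (V × V)) (e : V × V) : Prop :=
  e ∈ E ∧ ∃ u v : V, (Reaches E u v ∧ Reaches E v u) ∧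
    ¬ (Reaches (E \ {e}) u v ∧ Reaches (E \ {e}) v u)

/-- A 2-edge-connected digraph: strongly connected and stays so after deleting any edge. -/
def Is2ECGraph (E : Set (V × V)) : Prop :=
  StronglyConnected E ∧ ∀ e ∈ E, StronglyConnected (E \ {e})

/-- Edges of `E` induced on the vertex set `C`. -/
def restrictE (E : Set (V × V)) (C : Set V) : Set (V × V) :=
  {e ∈ E | e.1 ∈ C ∧ e.2 ∈ C}

def SCOn (E' : Set (V × V)) (C : Set V) : Prop :=
  ∀ u ∈ C, ∀ v ∈ C, Reaches E' u v

/-- `E'` is a 2-edge-connected (spanning sub)graph on the vertex set `C`. -/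
def Is2ECOn (E' : Set (V × V)) (C : Set V) : Prop :=
  SCOn E' C ∧ ∀ e ∈ E', SCOn (E' \ {e}) C

/-- A 2-edge-connected component: a maximal vertex set inducing a 2-edge-connected subgraph. -/
def Is2ECComponent (E : Set (V × V)) (C : Set V) : Prop :=
  Is2ECOn (restrictE E C) C ∧
    ∀ D : Set V, C ⊆ D → Is2ECOn (restrictE E D) D → D = C

/-- A solution to 2EC-B: a strongly connected spanning subgraph with the same
2-edge-connected blocks. -/
def IsSolutionB (E E' : Set (V × V)) : Prop :=
  E' ⊆ E ∧ StronglyConnected E' ∧ SameBlocks E' E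

/-- The reverse digraph. -/
def revE (E : Set (V × V)) : Set (V × V) := {e | (e.2, e.1) ∈ E}

/-- A bridge of the flow graph with start vertex `s`: an edge contained in every
walk from `s` to its head. -/
def IsBridge (E : Set (V × V)) (s : V) (e : V × V) : Prop :=
  e ∈ E ∧ ∀ p, IsWalk E s e.2 p → e ∈ p

/-- `u` is a vertex of the walk `p` starting at `s`. -/
def OnWalk (s : V) (p : List (V × V)) (u : V) : Prop :=
  u = s ∨ ∃ e ∈ p, e.2 = u

/-- `u` dominates `w` in the flow graph with start `s`. -/
def Dom (E : Set (V × V)) (s u w : V) : Prop :=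
  ∀ p, IsWalk E s w p → OnWalk s p u

def PDom (E : Set (V × V)) (s u w : V) : Prop := Dom E s u w ∧ u ≠ w

/-- `u` is the immediate dominator of `w`. -/
def Idom (E : Set (V × V)) (s u w : V) : Prop :=
  PDom E s u w ∧ ∀ x, PDom E s x w → Dom E s x u

/-- Marked vertices: roots of the trees of the canonical decomposition of the
dominator tree, i.e. `s` and the heads of bridges of `G(s)`. -/
def Marked (E : Set (V × V)) (s r : V) : Prop :=
  r = s ∨ ∃ e, IsBridge E s e ∧ e.2 = r

/-- `w` belongs to the tree `T(r)` of the canonical decomposition: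
`r` is the nearest marked dominator of `w`. -/
def InTree (E : Set (V × V)) (s r w : V) : Prop :=
  Marked E s r ∧ Dom E s r w ∧ ∀ x, Marked E s x → Dom E s x w → Dom E s x r

/-- A spanning tree of the flow graph `G(s)` rooted at `s`. -/
def IsSpanningTree (E : Set (V × V)) (s : V) (T : Set (V × V)) : Prop :=
  T ⊆ E ∧ (∀ v, Reaches T s v) ∧ (∀ v, v ≠ s → ∃! e, e ∈ T ∧ e.2 = v) ∧
    ∀ e ∈ T, e.2 ≠ s

/-- Two independent spanning trees: for every `v`, the two tree paths from `s`
to `v` share only dominators of `v`. -/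
def IndependentTrees (E : Set (V × V)) (s : V) (T₁ T₂ : Set (V × V)) : Prop :=
  IsSpanningTree E s T₁ ∧ IsSpanningTree E s T₂ ∧
    ∀ v p q, IsWalk T₁ s v p → IsWalk T₂ s v q →
      ∀ u, OnWalk s p u → OnWalk s q u → Dom E s u v

/-- The contraction map defining the first-level auxiliary graph `G_r`:
vertices of `T(r)` stay put, descendants of a marked child `x` of a boundary
vertex of `T(r)` are contracted into `x`, and non-descendants of `r` are
contracted into `d(r)`. -/
def ContractsTo (E : Set (V × V)) (s r v x : V) : Prop :=
  (InTree E s r v ∧ x = v) ∨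
  (Dom E s r v ∧ ¬ InTree E s r v ∧ Marked E s x ∧ Dom E s x v ∧
    ∃ u, InTree E s r u ∧ Idom E s u x) ∨
  (¬ Dom E s r v ∧ Idom E s x r)

/-- The edge set of the first-level auxiliary graph `G_r`. -/
def AuxE (E : Set (V × V)) (s r : V) : Set (V × V) :=
  {e | ∃ a b, (a, b) ∈ E ∧ ContractsTo E s r a e.1 ∧ ContractsTo E s r b e.2}

def cutEdges (E : Set (V × V)) (U W : Set V) : Set (V × V) :=
  {e ∈ E | e.1 ∈ U ∧ e.2 ∈ W}

def IsCut (u w : V) (U W : Set V) : Prop := u ∈ U ∧ w ∈ W ∧ Disjoint U W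

def IsMinCut (E : Set (V × V)) (u w : V) (U W : Set V) : Prop :=
  IsCut u w U W ∧ ∀ U' W' : Set V, IsCut u w U' W' →
    (cutEdges E U W).ncard ≤ (cutEdges E U' W').ncard

/-- There exist `k` pairwise edge-disjoint walks from `u` to `w`. -/
def HasEDP (E : Set (V × V)) (u w : V) (k : ℕ) : Prop :=
  ∃ P : Fin k → List (V × V), (∀ i, IsWalk E u w (P i)) ∧
    ∀ i j, i ≠ j → (P i).Disjoint (P j)

/-- The (loop-free, simple) quotient of the inter-component edges `F` under the
component map `h`. -/
def quotE {V' : Type*} (h : V → V') (F : Set (V × V)) : Set (V' × V') :=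
  {q | ∃ e ∈ F, h e.1 = q.1 ∧ h e.2 = q.2 ∧ q.1 ≠ q.2}

/-- A solution to 2EC-C: a strongly connected spanning subgraph with the same
2-edge-connected components. -/
def IsSolutionC (E E' : Set (V × V)) : Prop :=
  E' ⊆ E ∧ StronglyConnected E' ∧
    ∀ C : Set V, Is2ECComponent E C ↔ Is2ECComponent E' C

/-- One step of the deletion process: delete an edge `(x,y)` such that two
edge-disjoint `x → y` paths remain. -/
def DelStep (E₁ E₂ : Set (V × V)) : Prop :=
  ∃ x y : V, (x, y) ∈ E₁ ∧ E₂ = E₁ \ {(x, y)} ∧ TwoEDP E₂ x y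


lemma isWalk_mono {E E' : Set (V × V)} (hEE : E ⊆ E') {u v : V} {p : List (V × V)}
    (hw : IsWalk E u v p) : IsWalk E' u v p := by
  induction hw with
  | nil u => exact .nil u
  | cons h hp ih => exact .cons (hEE h) ih

lemma reaches_mono {E E' : Set (V × V)} (hEE : E ⊆ E') {u v : V} :
    Reaches E u v → Reaches E' u v
  | ⟨p, hp⟩ => ⟨p, isWalk_mono hEE hp⟩

lemma isWalk_append {E : Set (V × V)} {u v w : V} {p q : List (V × V)}
    (h1 : IsWalk E u v p) (h2 : IsWalk E v w q) : IsWalk E u w (p ++ q) := by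
  induction h1 with
  | nil u => exact h2
  | cons h hp ih => exact .cons h (ih h2)

lemma reaches_trans {E : Set (V × V)} {u v w : V}
    (h1 : Reaches E u v) (h2 : Reaches E v w) : Reaches E u w := by
  obtain ⟨p, hp⟩ := h1; obtain ⟨q, hq⟩ := h2
  exact ⟨p ++ q, isWalk_append hp hq⟩

lemma scOn_union {L M : Set (V × V)} {C D : Set V} {w : V}
    (hL : SCOn L C) (hM : SCOn M D) (hwC : w ∈ C) (hwD : w ∈ D) :
    SCOn (L ∪ M) (C ∪ D) := by
  have key : ∀ u ∈ C ∪ D, Reaches (L ∪ M) u w ∧ Reaches (L ∪ M) w u := by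
    rintro u (hu | hu)
    · exact ⟨reaches_mono Set.subset_union_left (hL u hu w hwC),
        reaches_mono Set.subset_union_left (hL w hwC u hu)⟩
    · exact ⟨reaches_mono Set.subset_union_right (hM u hu w hwD),
        reaches_mono Set.subset_union_right (hM w hwD u hu)⟩
  intro u hu v hv
  exact reaches_trans (key u hu).1 (key v hv).2

lemma scOn_mono {L M : Set (V × V)} {C : Set V} (hLM : L ⊆ M) (hL : SCOn L C) : SCOn M C :=
  fun u hu v hv => reaches_mono hLM (hL u hu v hv)

lemma is2ECOn_mono {L M : Set (V × V)} {C : Set V} (hLM : L ⊆ M) (hL : Is2ECOn L C) :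
    Is2ECOn M C := by
  refine ⟨scOn_mono hLM hL.1, fun e he => ?_⟩
  by_cases heL : e ∈ L
  · exact scOn_mono (Set.diff_subset_diff_left hLM) (hL.2 e heL)
  · exact scOn_mono (Set.subset_diff_singleton hLM heL) hL.1

lemma is2ECOn_union {L M : Set (V × V)} {C D : Set V} {w : V}
    (hL : Is2ECOn L C) (hM : Is2ECOn M D) (hwC : w ∈ C) (hwD : w ∈ D) :
    Is2ECOn (L ∪ M) (C ∪ D) := by
  refine ⟨scOn_union hL.1 hM.1 hwC hwD, fun e he => ?_⟩
  have h1 : SCOn (L \ {e}) C := by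
    by_cases heL : e ∈ L
    · exact hL.2 e heL
    · exact scOn_mono (Set.subset_diff_singleton (le_refl L) heL) hL.1
  have h2 : SCOn (M \ {e}) D := by
    by_cases heM : e ∈ M
    · exact hM.2 e heM
    · exact scOn_mono (Set.subset_diff_singleton (le_refl M) heM) hM.1
  have := scOn_union h1 h2 hwC hwD
  rwa [← Set.union_diff_distrib] at this

lemma restrictE_mono {E₁ E₂ : Set (V × V)} {C : Set V} (hE : E₁ ⊆ E₂) :
    restrictE E₁ C ⊆ restrictE E₂ C :=
  fun e ⟨he, hc⟩ => ⟨hE he, hc⟩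

lemma restrictE_union_subset {X : Set (V × V)} {C D : Set V} :
    restrictE X C ∪ restrictE X D ⊆ restrictE X (C ∪ D) := by
  rintro e (⟨he, h1, h2⟩ | ⟨he, h1, h2⟩)
  · exact ⟨he, Or.inl h1, Or.inl h2⟩
  · exact ⟨he, Or.inr h1, Or.inr h2⟩

/-- Any nonempty 2EC component coincides with the fiber of any of its members,
provided all fibers are components. -/
lemma comp_eq_fiber {V' : Type*} {h : V → V'} {X : Set (V × V)}
    (hfib : ∀ u : V, Is2ECComponent X {v | h v = h u})
    {C : Set V} (hC : Is2ECComponent X C) {u : V} (hu : u ∈ C) :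
    C = {v | h v = h u} := by
  set Cu : Set V := {v | h v = h u} with hCu
  have huCu : u ∈ Cu := rfl
  have hun : Is2ECOn (restrictE X (C ∪ Cu)) (C ∪ Cu) :=
    is2ECOn_mono restrictE_union_subset (is2ECOn_union hC.1 (hfib u).1 hu huCu)
  have e1 : C ∪ Cu = C := hC.2 (C ∪ Cu) Set.subset_union_left hun
  have e2 : C ∪ Cu = Cu := (hfib u).2 (C ∪ Cu) Set.subset_union_right hun
  rw [← e1, e2]

lemma comp_transfer {V' : Type*} {h : V → V'} {X Y : Set (V × V)}
    (hX : ∀ u : V, Is2ECComponent X {v | h v = h u})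
    (hY : ∀ u : V, Is2ECComponent Y {v | h v = h u})
    {C : Set V} (hC : Is2ECComponent X C) : Is2ECComponent Y C := by
  by_cases hne : ∃ u, u ∈ C
  · obtain ⟨u, hu⟩ := hne
    rw [comp_eq_fiber hX hC hu]
    exact hY u
  · -- C is empty; then V must be empty
    have hCempty : C = ∅ := Set.eq_empty_iff_forall_notMem.2 (fun x hx => hne ⟨x, hx⟩)
    have hVempty : IsEmpty V := by
      by_contra hv
      rw [not_isEmpty_iff] at hv
      obtain ⟨v⟩ := hv
      have := hC.2 {w | h w = h v} (hCempty ▸ Set.empty_subset _) (hX v).1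
      have hvmem : v ∈ {w | h w = h v} := rfl
      rw [this, hCempty] at hvmem
      exact hvmem
    subst hCempty
    constructor
    · exact ⟨fun u hu => absurd hu (Set.notMem_empty u),
        fun e he u hu => absurd hu (Set.notMem_empty u)⟩
    · intro D _ _
      exact Set.eq_empty_iff_forall_notMem.2 (fun x _ => hVempty.elim x)

lemma lift_walk {V' : Type*} {h : V → V'} {F K : Set (V × V)}
    (hfib : ∀ u v : V, h u = h v → Reaches (F ∪ K) u v)
    {a b : V'} {q : List (V' × V')} (hq : IsWalk (quotE h F) a b q) :
    ∀ u v : V, h u = a → h v = b → Reaches (F ∪ K) u v := by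
  induction hq with
  | nil a => intro u v hu hv; exact hfib u v (hu.trans hv.symm)
  | @cons a c b q hedge hp ih =>
    intro u v hu hv
    obtain ⟨e, heF, he1, he2, _⟩ := hedge
    have r1 : Reaches (F ∪ K) u e.1 := hfib u e.1 (hu.trans he1.symm)
    have r2 : Reaches (F ∪ K) e.1 e.2 :=
      ⟨[e], by rw [← Prod.mk.eta (p := e)]; exact .cons (Or.inl heF) (.nil _)⟩
    exact reaches_trans r1 (reaches_trans r2 (ih e.2 v he2 hv))

lemma proj_walk {V' : Type*} (h : V → V') {X : Set (V × V)} {u v : V} {p : List (V × V)}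
    (hp : IsWalk X u v p) :
    Reaches (quotE h {e ∈ X | h e.1 ≠ h e.2}) (h u) (h v) := by
  induction hp with
  | nil u => exact ⟨[], .nil _⟩
  | @cons u x w p hmem hp ih =>
    by_cases hc : h u = h x
    · rw [hc]; exact ih
    · refine reaches_trans ⟨[(h u, h x)], ?_⟩ ih
      exact .cons ⟨(u, x), ⟨hmem, hc⟩, rfl, rfl, hc⟩ (.nil _)

theorem stmt13 {V' : Type*} [Fintype V] (E : Set (V × V)) (h : V → V')
    (hsurj : Function.Surjective h)
    (hSC : StronglyConnected E)
    (hcomp : ∀ u : V, Is2ECComponent E {v | h v = h u})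
    (K F : Set (V × V)) (hK : K ⊆ E) (hKin : ∀ e ∈ K, h e.1 = h e.2)
    (hK2 : ∀ C : Set V, Is2ECComponent E C → Is2ECOn (restrictE K C) C)
    (hKapx : ∀ C : Set V, Is2ECComponent E C →
      ∀ L : Set (V × V), L ⊆ restrictE E C → Is2ECOn L C →
        2 * (restrictE K C).ncard ≤ 3 * L.ncard)
    (hF : F ⊆ {e ∈ E | h e.1 ≠ h e.2})
    (hFinj : ∀ e₁ ∈ F, ∀ e₂ ∈ F, h e₁.1 = h e₂.1 → h e₁.2 = h e₂.2 → e₁ = e₂)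
    (hFsc : StronglyConnected (quotE h F))
    (hFapx : ∀ F' : Set (V × V), F' ⊆ {e ∈ E | h e.1 ≠ h e.2} →
      StronglyConnected (quotE h F') → 2 * F.ncard ≤ 3 * F'.ncard) :
    IsSolutionC E (F ∪ K) ∧
      ∀ E'' : Set (V × V), IsSolutionC E E'' →
        2 * (F ∪ K).ncard ≤ 3 * E''.ncard := by
  have hFE : F ⊆ E := fun e he => (hF he).1
  have hPE : F ∪ K ⊆ E := Set.union_subset hFE hK
  -- fibers are components of F ∪ K
  have hPfib : ∀ u : V, Is2ECComponent (F ∪ K) {v | h v = h u} := by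
    intro u
    constructor
    · exact is2ECOn_mono (restrictE_mono Set.subset_union_right) (hK2 _ (hcomp u))
    · intro D hD hD2
      exact (hcomp u).2 D hD (is2ECOn_mono (restrictE_mono hPE) hD2)
  -- reachability within fibers
  have hfibreach : ∀ u v : V, h u = h v → Reaches (F ∪ K) u v := by
    intro u v huv
    have h2 := (hK2 _ (hcomp u)).1
    have hr := h2 u rfl v huv.symm
    exact reaches_mono (fun e he => Or.inr he.1) hr
  have hPsc : StronglyConnected (F ∪ K) := by
    intro u v
    obtain ⟨q, hq⟩ := hFsc (h u) (h v)
    exact lift_walk hfibreach hq u v rfl rfl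
  refine ⟨⟨hPE, hPsc, fun C => ⟨comp_transfer hcomp hPfib, comp_transfer hPfib hcomp⟩⟩, ?_⟩
  intro E'' hE''
  obtain ⟨hE''E, hE''sc, hE''comp⟩ := hE''
  -- split E'' into inter- and intra-component edges
  have hFbound : 2 * F.ncard ≤ 3 * {e ∈ E'' | h e.1 ≠ h e.2}.ncard := by
    refine hFapx _ (fun e he => ⟨hE''E he.1, he.2⟩) ?_
    intro a b
    obtain ⟨u, rfl⟩ := hsurj a
    obtain ⟨v, rfl⟩ := hsurj b
    obtain ⟨p, hp⟩ := hE''sc u v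
    exact proj_walk h hp
  haveI : Finite V' := Finite.of_surjective h hsurj
  haveI : Fintype V' := Fintype.ofFinite V'
  have fibercomp'' : ∀ u : V, Is2ECComponent E'' {v | h v = h u} :=
    fun u => (hE''comp _).1 (hcomp u)
  have key : ∀ a : V', 2 * {e ∈ K | h e.1 = a}.ncard ≤
      3 * {e ∈ {e ∈ E'' | h e.1 = h e.2} | h e.1 = a}.ncard := by
    intro a
    obtain ⟨u, rfl⟩ := hsurj a
    have e1 : {e ∈ K | h e.1 = h u} = restrictE K {v | h v = h u} := by
      ext e
      constructor
      · rintro ⟨heK, he1⟩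
        exact ⟨heK, he1, (hKin e heK).symm.trans he1⟩
      · rintro ⟨heK, he1, _⟩; exact ⟨heK, he1⟩
    have e2 : {e ∈ {e ∈ E'' | h e.1 = h e.2} | h e.1 = h u} =
        restrictE E'' {v | h v = h u} := by
      ext e
      constructor
      · rintro ⟨⟨heE, hee⟩, he1⟩
        exact ⟨heE, he1, hee.symm.trans he1⟩
      · rintro ⟨heE, he1, he2⟩
        exact ⟨⟨heE, he1.trans he2.symm⟩, he1⟩
    rw [e1, e2]
    exact hKapx _ (hcomp u) _ (restrictE_mono hE''E) (fibercomp'' u).1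
  have claim : ∀ S : Finset V',
      2 * {e ∈ K | h e.1 ∈ S}.ncard ≤ 3 * {e ∈ {e ∈ E'' | h e.1 = h e.2} | h e.1 ∈ S}.ncard := by
    intro S
    haveI : DecidableEq V' := Classical.decEq V'
    induction S using Finset.induction_on with
    | empty => simp
    | @insert a S ha ih =>
      have split : ∀ X : Set (V × V),
          {e ∈ X | h e.1 ∈ insert a S} = {e ∈ X | h e.1 = a} ∪ {e ∈ X | h e.1 ∈ S} := by
        intro X; ext e
        simp [Finset.mem_insert, Set.mem_setOf_eq, and_or_left]
      have disj : ∀ X : Set (V × V),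
          Disjoint {e ∈ X | h e.1 = a} {e ∈ X | h e.1 ∈ S} := by
        intro X
        rw [Set.disjoint_left]
        rintro e ⟨_, he⟩ ⟨_, he'⟩
        exact ha (he ▸ he')
      rw [split K, split _, Set.ncard_union_eq (disj K) (Set.toFinite _) (Set.toFinite _),
        Set.ncard_union_eq (disj _) (Set.toFinite _) (Set.toFinite _)]
      have := key a
      omega
  have hKbound : 2 * K.ncard ≤ 3 * {e ∈ E'' | h e.1 = h e.2}.ncard := by
    have h1 := claim Finset.univ
    have eK : {e ∈ K | h e.1 ∈ (Finset.univ : Finset V')} = K := by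
      ext e; simp [Set.mem_setOf_eq]
    have eK'' : {e ∈ {e ∈ E'' | h e.1 = h e.2} | h e.1 ∈ (Finset.univ : Finset V')} =
        {e ∈ E'' | h e.1 = h e.2} := by
      ext e; simp [Set.mem_setOf_eq]
    rwa [eK, eK''] at h1
  have hdisjFK : Disjoint F K := by
    rw [Set.disjoint_left]; intro e heF heK
    exact (hF heF).2 (hKin e heK)
  have hFK : (F ∪ K).ncard = F.ncard + K.ncard :=
    Set.ncard_union_eq hdisjFK (Set.toFinite _) (Set.toFinite _)
  have hE''eq : E'' = {e ∈ E'' | h e.1 ≠ h e.2} ∪ {e ∈ E'' | h e.1 = h e.2} := by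
    ext e; constructor
    · intro he; by_cases hc : h e.1 = h e.2
      · exact Or.inr ⟨he, hc⟩
      · exact Or.inl ⟨he, hc⟩
    · rintro (he | he) <;> exact he.1
  have hdisj'' : Disjoint {e ∈ E'' | h e.1 ≠ h e.2} {e ∈ E'' | h e.1 = h e.2} := by
    rw [Set.disjoint_left]; rintro e ⟨_, hne⟩ ⟨_, heq⟩; exact hne heq
  have hE''card : E''.ncard = {e ∈ E'' | h e.1 ≠ h e.2}.ncard +
      {e ∈ E'' | h e.1 = h e.2}.ncard := by
    conv_lhs => rw [hE''eq]
    exact Set.ncard_union_eq hdisj'' (Set.toFinite _) (Set.toFinite _)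
  rw [hFK, hE''card]
  omega
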